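/- The set S_{(s,0)} has Lebesgue measure zero. -/

import Mathlib

open Finset

/-- The term of the series: `c n / s ^ (c 1 + ... + c (n+1))` (0-indexed). -/
noncomputable def sTerm (s : ℕ) (c : ℕ → ℕ) (n : ℕ) : ℝ :=
  (c n : ℝ) / (s : ℝ) ^ (∑ k ∈ Finset.range (n + 1), c k)

/-- `x = Σ_{k=1}^∞ c_k / s^{c_1+⋯+c_k}`. -/
noncomputable def sVal (s : ℕ) (c : ℕ → ℕ) : ℝ := ∑' n : ℕ, sTerm s c n

/-- The sequence `(c_k)` has all terms in `{1, ..., s-1}`. -/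
def sValid (s : ℕ) (c : ℕ → ℕ) : Prop := ∀ k, 1 ≤ c k ∧ c k ≤ s - 1

/-- The set `S_{(s,0)}`. -/
def Sset (s : ℕ) : Set ℝ := { x | ∃ c : ℕ → ℕ, sValid s c ∧ x = sVal s c }

/-- The cylinder `Δ'_{c_1 ... c_n}` of rank `n` with base the first `n` terms of `c`. -/
def cyl (s n : ℕ) (c : ℕ → ℕ) : Set ℝ :=
  { x | ∃ c' : ℕ → ℕ, sValid s c' ∧ (∀ k < n, c' k = c k) ∧ x = sVal s c' }

/-- The cylinder `Δ'_{c_1 ... c_n p}`: prefix of length `n` from `c`, next digit `p`. -/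
def cylExt (s n : ℕ) (c : ℕ → ℕ) (p : ℕ) : Set ℝ :=
  { x | ∃ c' : ℕ → ℕ, sValid s c' ∧ (∀ k < n, c' k = c k) ∧ c' n = p ∧ x = sVal s c' }

/-- `g_n = Σ_{k=1}^n c_k / s^{c_1+⋯+c_k}`. -/
noncomputable def gPart (s n : ℕ) (c : ℕ → ℕ) : ℝ := ∑ k ∈ Finset.range n, sTerm s c k

/-- Extension of a finite prefix to an infinite sequence. -/
def extSeq (n : ℕ) (p : Fin n → ℕ) : ℕ → ℕ := fun k => if h : k < n then p ⟨k, h⟩ else 1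

lemma gPart_congr (s n : ℕ) {c c' : ℕ → ℕ} (h : ∀ k < n, c k = c' k) :
    gPart s n c = gPart s n c' := by
  unfold gPart sTerm
  refine Finset.sum_congr rfl fun k hk => ?_
  rw [Finset.mem_range] at hk
  have hsum : ∑ j ∈ Finset.range (k + 1), c j = ∑ j ∈ Finset.range (k + 1), c' j :=
    Finset.sum_congr rfl fun j hj =>
      h j (lt_of_lt_of_le (Finset.mem_range.mp hj) hk)
  rw [h k hk, hsum]

section aux

variable {s : ℕ} {c : ℕ → ℕ}

lemma sTerm_nonneg (s : ℕ) (c : ℕ → ℕ) (k : ℕ) : 0 ≤ sTerm s c k := by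
  unfold sTerm; positivity

lemma sTerm_le (hs : 2 < s) (hc : sValid s c) (n k : ℕ) :
    sTerm s c (n + k) ≤
      ((s : ℝ) - 1) * ((1 : ℝ) / s) ^ (∑ j ∈ Finset.range n, c j) * ((1 : ℝ) / s) ^ (k + 1) := by
  have hs0 : (0 : ℝ) < s := by exact_mod_cast Nat.lt_of_lt_of_le Nat.zero_lt_two hs.le
  have hinv0 : (0 : ℝ) ≤ 1 / s := by positivity
  have hinv1 : (1 : ℝ) / s ≤ 1 := by
    rw [div_le_one hs0]; exact_mod_cast Nat.one_le_of_lt hs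
  set T := ∑ j ∈ Finset.range n, c j with hT
  have hE : T + (k + 1) ≤ ∑ j ∈ Finset.range (n + k + 1), c j := by
    have := Finset.sum_range_add c n (k + 1)
    rw [show n + k + 1 = n + (k + 1) from by omega, this]
    have : k + 1 ≤ ∑ x ∈ Finset.range (k + 1), c (n + x) := by
      calc k + 1 = (Finset.range (k + 1)).card • 1 := by simp
        _ ≤ ∑ x ∈ Finset.range (k + 1), c (n + x) :=
          Finset.card_nsmul_le_sum _ _ _ fun x _ => (hc (n + x)).1
    omega
  have h1 : sTerm s c (n + k) =
      (c (n + k) : ℝ) * ((1 : ℝ) / s) ^ (∑ j ∈ Finset.range (n + k + 1), c j) := by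
    unfold sTerm
    rw [div_pow, one_pow, div_eq_mul_inv, div_eq_mul_inv, one_mul]
  rw [h1]
  have hc1 : (c (n + k) : ℝ) ≤ (s : ℝ) - 1 := by
    have := (hc (n + k)).2
    have hcast : (c (n + k) : ℝ) ≤ ((s - 1 : ℕ) : ℝ) := by exact_mod_cast this
    refine hcast.trans ?_
    have : ((s - 1 : ℕ) : ℝ) = (s : ℝ) - 1 := by
      rw [Nat.cast_sub (by omega)]; norm_num
    rw [this]
  have hpow : ((1 : ℝ) / s) ^ (∑ j ∈ Finset.range (n + k + 1), c j) ≤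
      ((1 : ℝ) / s) ^ (T + (k + 1)) := pow_le_pow_of_le_one hinv0 hinv1 hE
  calc (c (n + k) : ℝ) * ((1 : ℝ) / s) ^ (∑ j ∈ Finset.range (n + k + 1), c j)
      ≤ ((s : ℝ) - 1) * ((1 : ℝ) / s) ^ (T + (k + 1)) := by
        apply mul_le_mul hc1 hpow (by positivity) (by linarith [hs0])
    _ = ((s : ℝ) - 1) * ((1 : ℝ) / s) ^ T * ((1 : ℝ) / s) ^ (k + 1) := by
        rw [pow_add, mul_assoc]

lemma sTerm_summable (hs : 2 < s) (hc : sValid s c) : Summable (sTerm s c) := by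
  have hs0 : (0 : ℝ) < s := by exact_mod_cast Nat.lt_of_lt_of_le Nat.zero_lt_two hs.le
  have hinv0 : (0 : ℝ) ≤ 1 / s := by positivity
  have hinv1 : (1 : ℝ) / s < 1 := by
    rw [div_lt_one hs0]; exact_mod_cast Nat.lt_of_lt_of_le Nat.one_lt_two hs.le
  have hgeom : Summable fun k : ℕ => ((s : ℝ) - 1) * ((1 : ℝ) / s) ^ k :=
    (summable_geometric_of_lt_one hinv0 hinv1).mul_left _
  have hshift : Summable fun k : ℕ => ((s : ℝ) - 1) * ((1 : ℝ) / s) ^ (k + 1) :=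
    (summable_nat_add_iff 1).mpr hgeom
  refine Summable.of_nonneg_of_le (sTerm_nonneg s c) (fun k => ?_) hshift
  have := sTerm_le hs hc 0 k
  simpa using this

lemma tail_le (hs : 2 < s) (hc : sValid s c) (n : ℕ) :
    ∑' k : ℕ, sTerm s c (n + k) ≤ ((1 : ℝ) / s) ^ (∑ j ∈ Finset.range n, c j) := by
  have hs0 : (0 : ℝ) < s := by exact_mod_cast Nat.lt_of_lt_of_le Nat.zero_lt_two hs.le
  have hinv0 : (0 : ℝ) ≤ 1 / s := by positivity
  have hinv1 : (1 : ℝ) / s < 1 := by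
    rw [div_lt_one hs0]; exact_mod_cast Nat.lt_of_lt_of_le Nat.one_lt_two hs.le
  have hs1 : (1 : ℝ) < s := by exact_mod_cast Nat.lt_of_lt_of_le Nat.one_lt_two hs.le
  set T := ∑ j ∈ Finset.range n, c j with hT
  have hsumm : Summable (sTerm s c) := sTerm_summable hs hc
  have htail : Summable fun k : ℕ => sTerm s c (n + k) := by
    have := (summable_nat_add_iff n).mpr hsumm
    simpa [add_comm] using this
  have hgeom : Summable fun k : ℕ =>
      ((s : ℝ) - 1) * ((1 : ℝ) / s) ^ T * ((1 : ℝ) / s) ^ (k + 1) := by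
    have hg : Summable fun k : ℕ => ((1 : ℝ) / s) ^ k :=
      summable_geometric_of_lt_one hinv0 hinv1
    exact (((summable_nat_add_iff 1).mpr hg).mul_left _)
  have hle : ∑' k : ℕ, sTerm s c (n + k) ≤
      ∑' k : ℕ, ((s : ℝ) - 1) * ((1 : ℝ) / s) ^ T * ((1 : ℝ) / s) ^ (k + 1) :=
    Summable.tsum_le_tsum (fun k => sTerm_le hs hc n k) htail hgeom
  refine hle.trans ?_
  have hshift : ∑' k : ℕ, ((1 : ℝ) / s) ^ (k + 1) = 1 / ((s : ℝ) - 1) := by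
    have h0 : ∑' k : ℕ, ((1 : ℝ) / s) ^ k = (1 - (1 : ℝ) / s)⁻¹ :=
      tsum_geometric_of_lt_one hinv0 hinv1
    calc ∑' k : ℕ, ((1 : ℝ) / s) ^ (k + 1)
        = ∑' k : ℕ, ((1 : ℝ) / s) * ((1 : ℝ) / s) ^ k := by
          refine tsum_congr fun k => ?_; rw [pow_succ']
      _ = ((1 : ℝ) / s) * ∑' k : ℕ, ((1 : ℝ) / s) ^ k := tsum_mul_left
      _ = ((1 : ℝ) / s) * (1 - (1 : ℝ) / s)⁻¹ := by rw [h0]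
      _ = 1 / ((s : ℝ) - 1) := by
          have hne : (s : ℝ) ≠ 0 := by positivity
          have hne1 : (s : ℝ) - 1 ≠ 0 := by linarith
          field_simp
  rw [tsum_mul_left, hshift]
  rw [mul_one_div, mul_comm, mul_div_assoc]
  rw [div_self (by linarith), mul_one]

lemma sVal_split (hs : 2 < s) (hc : sValid s c) (n : ℕ) :
    sVal s c = gPart s n c + ∑' k : ℕ, sTerm s c (n + k) := by
  have hsumm : Summable (sTerm s c) := sTerm_summable hs hc
  have h := (Summable.sum_add_tsum_nat_add (f := sTerm s c) n hsumm).symm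
  unfold sVal gPart
  rw [h]
  congr 1
  exact tsum_congr fun k => by rw [add_comm]

end aux

lemma Sset_subset_cover (s n : ℕ) (hs : 2 < s) :
    Sset s ⊆ ⋃ p ∈ Fintype.piFinset (fun _ : Fin n => Finset.Icc 1 (s - 1)),
      Set.Icc (gPart s n (extSeq n p))
        (gPart s n (extSeq n p) + ((1 : ℝ) / s) ^ (∑ i, p i)) := by
  rintro x ⟨c, hc, rfl⟩
  set p : Fin n → ℕ := fun i => c i with hp
  have hmem : p ∈ Fintype.piFinset (fun _ : Fin n => Finset.Icc 1 (s - 1)) :=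
    Fintype.mem_piFinset.mpr fun i => Finset.mem_Icc.mpr ⟨(hc i).1, (hc i).2⟩
  refine Set.mem_biUnion hmem ?_
  have hg : gPart s n (extSeq n p) = gPart s n c := by
    refine gPart_congr s n fun k hk => ?_
    simp [extSeq, hk, hp]
  have hsum : (∑ i, p i) = ∑ k ∈ Finset.range n, c k := Fin.sum_univ_eq_sum_range c n
  rw [hg, hsum]
  have hsplit := sVal_split hs hc n
  constructor
  · rw [hsplit]
    have : 0 ≤ ∑' k : ℕ, sTerm s c (n + k) :=
      tsum_nonneg fun k => sTerm_nonneg s c (n + k)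
    linarith
  · rw [hsplit]
    have := tail_le hs hc n
    linarith

theorem stmt11 (s : ℕ) (hs : 2 < s) : MeasureTheory.volume (Sset s) = 0 := by
  have hs0 : (0 : ℝ) < s := by exact_mod_cast Nat.lt_of_lt_of_le Nat.zero_lt_two hs.le
  have hinv0 : (0 : ℝ) ≤ 1 / s := by positivity
  set a : ENNReal := ENNReal.ofReal ((1 : ℝ) / s) with ha
  set r : ENNReal := ∑ m ∈ Finset.Icc 1 (s - 1), a ^ m with hr
  -- the key estimate
  have key : ∀ n : ℕ, MeasureTheory.volume (Sset s) ≤ r ^ n := by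
    intro n
    calc MeasureTheory.volume (Sset s)
        ≤ MeasureTheory.volume (⋃ p ∈ Fintype.piFinset (fun _ : Fin n => Finset.Icc 1 (s - 1)),
            Set.Icc (gPart s n (extSeq n p))
              (gPart s n (extSeq n p) + ((1 : ℝ) / s) ^ (∑ i, p i))) :=
          MeasureTheory.measure_mono (Sset_subset_cover s n hs)
      _ ≤ ∑ p ∈ Fintype.piFinset (fun _ : Fin n => Finset.Icc 1 (s - 1)),
            MeasureTheory.volume (Set.Icc (gPart s n (extSeq n p))
              (gPart s n (extSeq n p) + ((1 : ℝ) / s) ^ (∑ i, p i))) :=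
          MeasureTheory.measure_biUnion_finset_le _ _
      _ = ∑ p ∈ Fintype.piFinset (fun _ : Fin n => Finset.Icc 1 (s - 1)),
            ∏ i : Fin n, a ^ p i := by
          refine Finset.sum_congr rfl fun p _ => ?_
          rw [Real.volume_Icc, add_sub_cancel_left, ENNReal.ofReal_pow hinv0,
            ← Finset.prod_pow_eq_pow_sum]
      _ = ∏ _i : Fin n, ∑ m ∈ Finset.Icc 1 (s - 1), a ^ m :=
          (Finset.prod_univ_sum _ _).symm
      _ = r ^ n := by rw [Finset.prod_const, Finset.card_univ, Fintype.card_fin]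
  -- r < 1
  have hrlt : r < 1 := by
    have hterm : ∀ m ∈ Finset.Icc 1 (s - 1), a ^ m ≤ a := by
      intro m hm
      have h1m : 1 ≤ m := (Finset.mem_Icc.mp hm).1
      have ha1 : a ≤ 1 := by
        rw [ha]
        refine ENNReal.ofReal_le_one.mpr ?_
        rw [div_le_one hs0]
        exact_mod_cast Nat.one_le_of_lt hs
      calc a ^ m ≤ a ^ 1 := pow_le_pow_of_le_one zero_le ha1 h1m
        _ = a := pow_one a
    have hsumle : r ≤ (Finset.Icc 1 (s - 1)).card • a := by
      rw [hr]
      exact Finset.sum_le_card_nsmul _ _ _ hterm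
    have hcard : (Finset.Icc 1 (s - 1)).card = s - 1 := by
      rw [Nat.card_Icc]; omega
    have hlt : ((s - 1 : ℕ) : ENNReal) * a < 1 := by
      rw [ha, ← ENNReal.ofReal_natCast (s - 1), ← ENNReal.ofReal_mul (by positivity)]
      refine ENNReal.ofReal_lt_one.mpr ?_
      rw [mul_one_div, div_lt_one hs0]
      have : ((s - 1 : ℕ) : ℝ) = (s : ℝ) - 1 := by
        rw [Nat.cast_sub (by omega)]; norm_num
      rw [this]; linarith
    calc r ≤ (Finset.Icc 1 (s - 1)).card • a := hsumle
      _ = ((s - 1 : ℕ) : ENNReal) * a := by rw [hcard, nsmul_eq_mul]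
      _ < 1 := hlt
  have htend : Filter.Tendsto (fun n => r ^ n) Filter.atTop (nhds 0) :=
    ENNReal.tendsto_pow_atTop_nhds_zero_of_lt_one hrlt
  have : MeasureTheory.volume (Sset s) ≤ 0 := ge_of_tendsto' htend key
  exact le_antisymm this zero_le
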